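/- arXiv:1605.06689 — 2 statements merged into one kernel-verified Lean document; each statement's English description precedes it below -/
import Mathlib

section
/- The Cauchy transform of the Wigner semicircle distribution with variance σ² equals G(z) = 2/(z + √(z²-4σ²)) for z in the upper half-plane, where the square root branch is chosen so that √(z²-4σ²) ~ z as z → ∞. -/
open MeasureTheory Complex Filter
open scoped NNReal ENNReal
open Metric Set

lemma circleIntegral_add' {f g : ℂ → ℂ} {c : ℂ} {R : ℝ} (hf : CircleIntegrable f c R)
    (hg : CircleIntegrable g c R) :
    (∮ w in C(c, R), (f w + g w)) = (∮ w in C(c, R), f w) + ∮ w in C(c, R), g w := by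
  simp only [circleIntegral, smul_add, intervalIntegral.integral_add hf.out hg.out]

lemma decomp_integral {p q : ℂ} (hmul : q * p = 1) (hp : ‖p‖ < 1) (hq : 1 < ‖q‖) :
    (∮ w in C((0:ℂ), 1), ((1:ℂ) + (q + p) * (w - 0)⁻¹ + (w - 0) ^ (-2 : ℤ)
        + (q - p) * (w - q)⁻¹ + (p - q) * (w - p)⁻¹)) = 2 * Real.pi * I * (2 * p) := by
  have h0s : (0:ℂ) ∉ sphere (0:ℂ) |1| := by simp
  have hqs : q ∉ sphere (0:ℂ) |1| := by
    simp only [mem_sphere_iff_norm, sub_zero]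
    intro h; rw [h] at hq; simp at hq
  have hps : p ∉ sphere (0:ℂ) |1| := by
    simp only [mem_sphere_iff_norm, sub_zero]
    intro h; rw [h] at hp; simp at hp
  have i1 : CircleIntegrable (fun _ : ℂ => (1:ℂ)) 0 1 := circleIntegrable_const 1 0 1
  have i2 : CircleIntegrable (fun w : ℂ => (q + p) * (w - 0)⁻¹) 0 1 :=
    (circleIntegrable_sub_inv_iff.2 (Or.inr h0s)).const_mul _
  have i3 : CircleIntegrable (fun w : ℂ => (w - 0) ^ (-2 : ℤ)) 0 1 :=
    circleIntegrable_sub_zpow_iff.2 (Or.inr (Or.inr h0s))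
  have i4 : CircleIntegrable (fun w : ℂ => (q - p) * (w - q)⁻¹) 0 1 :=
    (circleIntegrable_sub_inv_iff.2 (Or.inr hqs)).const_mul _
  have i5 : CircleIntegrable (fun w : ℂ => (p - q) * (w - p)⁻¹) 0 1 :=
    (circleIntegrable_sub_inv_iff.2 (Or.inr hps)).const_mul _
  have e1 : (∮ w in C((0:ℂ), 1), (1:ℂ)) = 0 := by
    have := circleIntegral.integral_sub_zpow_of_ne (n := 0) (by decide) (0:ℂ) (0:ℂ) 1
    simpa using this
  have e2 : (∮ w in C((0:ℂ), 1), (w - (0:ℂ))⁻¹) = 2 * Real.pi * I :=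
    circleIntegral.integral_sub_inv_of_mem_ball (by simp)
  have e3 : (∮ w in C((0:ℂ), 1), (w - (0:ℂ)) ^ (-2 : ℤ)) = 0 :=
    circleIntegral.integral_sub_zpow_of_ne (by decide) _ _ _
  have e4 : (∮ w in C((0:ℂ), 1), (w - q)⁻¹) = 0 := by
    apply Complex.circleIntegral_eq_zero_of_differentiable_on_off_countable zero_le_one
      countable_empty
    · refine ContinuousOn.inv₀ ((continuous_id.sub continuous_const).continuousOn) ?_
      intro w hw
      refine sub_ne_zero.2 ?_
      intro h; subst h
      have := mem_closedBall_iff_norm.mp hw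
      simp only [sub_zero] at this; linarith
    · intro w hw
      have : w - q ≠ 0 := by
        intro h
        have := mem_ball_iff_norm.mp hw.1
        rw [sub_eq_zero] at h; subst h
        simp only [sub_zero] at this; linarith
      exact (differentiableAt_id.sub_const q).inv this
  have e5 : (∮ w in C((0:ℂ), 1), (w - p)⁻¹) = 2 * Real.pi * I :=
    circleIntegral.integral_sub_inv_of_mem_ball (by simpa using hp)
  have i12 : CircleIntegrable (fun w : ℂ => (1:ℂ) + (q + p) * (w - 0)⁻¹) 0 1 := i1.add i2
  have i123 : CircleIntegrable (fun w : ℂ => (1:ℂ) + (q + p) * (w - 0)⁻¹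
      + (w - 0) ^ (-2 : ℤ)) 0 1 := i12.add i3
  have i1234 : CircleIntegrable (fun w : ℂ => (1:ℂ) + (q + p) * (w - 0)⁻¹ + (w - 0) ^ (-2 : ℤ)
      + (q - p) * (w - q)⁻¹) 0 1 := i123.add i4
  have E12 : (∮ w in C((0:ℂ), 1), ((1:ℂ) + (q + p) * (w - 0)⁻¹))
      = (q + p) * (2 * Real.pi * I) := by
    rw [circleIntegral_add' i1 i2, e1, circleIntegral.integral_const_mul, e2, zero_add]
  have E123 : (∮ w in C((0:ℂ), 1), ((1:ℂ) + (q + p) * (w - 0)⁻¹ + (w - 0) ^ (-2 : ℤ)))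
      = (q + p) * (2 * Real.pi * I) := by
    rw [circleIntegral_add' i12 i3, e3, add_zero]
    exact E12
  have E1234 : (∮ w in C((0:ℂ), 1), ((1:ℂ) + (q + p) * (w - 0)⁻¹ + (w - 0) ^ (-2 : ℤ)
      + (q - p) * (w - q)⁻¹)) = (q + p) * (2 * Real.pi * I) := by
    rw [circleIntegral_add' i123 i4, circleIntegral.integral_const_mul, e4,
      mul_zero, add_zero]
    exact E123
  rw [circleIntegral_add' i1234 i5, circleIntegral.integral_const_mul,
    e5, E1234]
  ring

lemma pointwise_id {a : ℝ} (ha : 0 < a) {z p q : ℂ} (hz : 0 < z.im)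
    (hmul : q * p = 1) (hsum : q + p = 2 * z / (a:ℂ))
    (hp : ‖p‖ < 1) (hq : 1 < ‖q‖) (θ : ℝ) :
    ((Real.sin θ : ℂ))^2 * (z - (a:ℂ) * (Real.cos θ : ℂ))⁻¹
      = deriv (circleMap 0 1) θ •
        ((2 * (a:ℂ) * I)⁻¹ *
          ((circleMap 0 1 θ ^ 2 - 1)^2 /
            (circleMap 0 1 θ ^ 2 * (circleMap 0 1 θ - q) * (circleMap 0 1 θ - p)))) := by
  have ha' : (a:ℂ) ≠ 0 := by exact_mod_cast ha.ne'
  have hq0 : q ≠ 0 := by intro h; rw [h] at hq; norm_num at hq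
  set w := circleMap 0 1 θ with hwdef
  have hw1 : ‖w‖ = 1 := by simp [hwdef]
  have hw0 : w ≠ 0 := by intro h; rw [h] at hw1; simp at hw1
  have hwq : w - q ≠ 0 := by
    intro h; rw [sub_eq_zero] at h; rw [h] at hw1; rw [hw1] at hq; simp at hq
  have hwp : w - p ≠ 0 := by
    intro h; rw [sub_eq_zero] at h; rw [h] at hw1; rw [hw1] at hp; simp at hp
  set cθ := (Real.cos θ : ℂ) with hc
  set sθ := (Real.sin θ : ℂ) with hsd
  have hsc : cθ^2 + sθ^2 = 1 := by
    rw [hc, hsd]; exact_mod_cast congrArg (Complex.ofReal) (Real.cos_sq_add_sin_sq θ)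
  have hw : w = cθ + sθ * I := by
    rw [hwdef, circleMap]
    push_cast
    rw [Complex.exp_mul_I]
    rw [hc, hsd, Complex.ofReal_cos, Complex.ofReal_sin]
    ring
  have hwinv : w⁻¹ = cθ - sθ * I := by
    refine inv_eq_of_mul_eq_one_right ?_
    rw [hw]
    linear_combination hsc - sθ^2 * Complex.I_sq
  have hcos2 : 2*w*cθ = w^2 + 1 := by
    have h1 : w * w⁻¹ = 1 := mul_inv_cancel₀ hw0
    rw [hwinv] at h1
    linear_combination h1 - w * hw
  have hs2w : 4*w^2*sθ^2 = -((w^2-1)^2) := by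
    linear_combination 4*w^2*hsc - (2*w*cθ + w^2 + 1)*hcos2
  have h3 : 2*z = (a:ℂ)*(q+p) := by
    rw [hsum]; field_simp
  have hden : z - (a:ℂ) * cθ ≠ 0 := by
    have him : (z - (a:ℂ)*cθ).im = z.im := by simp [hc]
    intro h; rw [h] at him; simp at him; rw [← him] at hz; exact lt_irrefl _ hz
  have hX : w^2*(w-q)*(w-p)*(2*(a:ℂ)*I) ≠ 0 :=
    mul_ne_zero (mul_ne_zero (mul_ne_zero (pow_ne_zero 2 hw0) hwq) hwp)
      (mul_ne_zero (mul_ne_zero two_ne_zero ha') I_ne_zero)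
  rw [deriv_circleMap, smul_eq_mul, ← div_eq_mul_inv, inv_mul_eq_div, div_div,
    ← mul_div_assoc, div_eq_div_iff hden hX]
  linear_combination (I*(a:ℂ)*(w-q)*(w-p)/2) * hs2w + I*(w^2-1)^2*((a:ℂ)/2) * hcos2
    - I*(w^2-1)^2*(w/2) * h3 - I*(w^2-1)^2*((a:ℂ)/2) * hmul

lemma key_interval {a : ℝ} (ha : 0 < a) {z p q : ℂ} (hz : 0 < z.im)
    (hmul : q * p = 1) (hsum : q + p = 2 * z / (a:ℂ))
    (hp : ‖p‖ < 1) (hq : 1 < ‖q‖) :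
    (∫ θ in (0:ℝ)..(2*Real.pi), ((Real.sin θ : ℂ))^2 * (z - (a:ℂ) * (Real.cos θ : ℂ))⁻¹)
      = 2 * Real.pi * p / (a:ℂ) := by
  have ha' : (a:ℂ) ≠ 0 := by exact_mod_cast ha.ne'
  have hq0 : q ≠ 0 := by intro h; rw [h] at hq; norm_num at hq
  have hpq : p = q⁻¹ := eq_inv_of_mul_eq_one_left (by rw [mul_comm] at hmul; exact hmul)
  have step1 : (∫ θ in (0:ℝ)..(2*Real.pi),
        ((Real.sin θ : ℂ))^2 * (z - (a:ℂ) * (Real.cos θ : ℂ))⁻¹)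
      = ∮ w in C((0:ℂ),1), (2*(a:ℂ)*I)⁻¹ * ((w^2-1)^2/(w^2*(w-q)*(w-p))) := by
    refine intervalIntegral.integral_congr fun θ _ => pointwise_id ha hz hmul hsum hp hq θ
  rw [step1]
  have step2 : (∮ w in C((0:ℂ),1), (2*(a:ℂ)*I)⁻¹ * ((w^2-1)^2/(w^2*(w-q)*(w-p))))
      = (2*(a:ℂ)*I)⁻¹ * ∮ w in C((0:ℂ),1), ((w^2-1)^2/(w^2*(w-q)*(w-p))) :=
    circleIntegral.integral_const_mul _ _ _ _
  rw [step2]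
  have step3 : (∮ w in C((0:ℂ),1), ((w^2-1)^2/(w^2*(w-q)*(w-p))))
      = ∮ w in C((0:ℂ), 1), ((1:ℂ) + (q + p) * (w - 0)⁻¹ + (w - 0) ^ (-2 : ℤ)
        + (q - p) * (w - q)⁻¹ + (p - q) * (w - p)⁻¹) := by
    refine circleIntegral.integral_congr zero_le_one fun w hw => ?_
    have hw1 : ‖w‖ = 1 := by simpa using hw
    have hw0 : w ≠ 0 := by intro h; rw [h] at hw1; simp at hw1
    have hwq : w - q ≠ 0 := by
      intro h; rw [sub_eq_zero] at h; rw [h] at hw1; rw [hw1] at hq; simp at hq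
    have hwp : w - p ≠ 0 := by
      intro h; rw [sub_eq_zero] at h; rw [h] at hw1; rw [hw1] at hp; simp at hp
    simp only [sub_zero, zpow_neg, zpow_two]
    have hD : w^2*(w-q)*(w-p) ≠ 0 :=
      mul_ne_zero (mul_ne_zero (pow_ne_zero 2 hw0) hwq) hwp
    have hX : w⁻¹ * w = 1 := inv_mul_cancel₀ hw0
    have hY : (w-q)⁻¹ * (w-q) = 1 := inv_mul_cancel₀ hwq
    have hZ : (w-p)⁻¹ * (w-p) = 1 := inv_mul_cancel₀ hwp
    rw [div_eq_iff hD]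
    linear_combination (3*w^2 - (q+p)*w - 1) * hmul
      - ((q+p)*w*(w-q)*(w-p) + (w-q)*(w-p)*(w⁻¹*w + 1)) * hX
      - (q-p)*w^2*(w-p) * hY - (p-q)*w^2*(w-q) * hZ
  rw [step3, decomp_integral hmul hp hq]
  field_simp

lemma small_root_norm (v : ℝ) (hv : 0 < v) (s : ℂ → ℂ)
    (hs : DifferentiableOn ℂ s {z : ℂ | 0 < z.im})
    (hsq : ∀ z : ℂ, 0 < z.im → s z ^ 2 = z ^ 2 - 4 * v)
    (hasymp : Tendsto (fun y : ℝ => s (y * Complex.I) / (y * Complex.I)) atTop (nhds 1)) :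
    ∀ z : ℂ, 0 < z.im → ‖z - s z‖ < 2 * Real.sqrt v := by
  set a : ℝ := 2 * Real.sqrt v with hadef
  have ha : 0 < a := by
    have := Real.sqrt_pos.mpr hv
    positivity
  have ha2 : a^2 = 4*v := by
    rw [hadef, mul_pow, Real.sq_sqrt hv.le]; ring
  have ha2C : ((a:ℂ))^2 = 4*(v:ℂ) := by exact_mod_cast congrArg Complex.ofReal ha2
  set U : Set ℂ := {z : ℂ | 0 < z.im} with hUdef
  have hUpre : IsPreconnected U := (convex_halfSpace_im_gt 0).isPreconnected
  have hfc : ContinuousOn (fun z => ‖z - s z‖) U :=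
    (continuousOn_id.sub hs.continuousOn).norm
  have hne : ∀ z ∈ U, ‖z - s z‖ ≠ a := by
    intro z hz h
    have hz' : 0 < z.im := hz
    have h1 : (z - s z) * (z + s z) = ((a:ℂ))^2 := by
      linear_combination -ha2C - hsq z hz'
    have hzs_ne : z - s z ≠ 0 := by
      intro h0; rw [h0] at h; simp at h; rw [← h] at ha; exact lt_irrefl _ ha
    have h4 : (z - s z) * (z + s z) = (z - s z) * (starRingEnd ℂ) (z - s z) := by
      rw [h1, Complex.mul_conj, Complex.normSq_eq_norm_sq, h]
      push_cast
      ring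
    have h5 : z + s z = (starRingEnd ℂ) (z - s z) := mul_left_cancel₀ hzs_ne h4
    have h6 := congrArg Complex.im h5
    simp only [Complex.add_im, Complex.conj_im, Complex.sub_im] at h6
    have hzim : z.im = 0 := by linarith
    rw [hzim] at hz'; exact lt_irrefl _ hz'
  obtain ⟨y, hy1, hy0⟩ :=
    ((Metric.tendsto_nhds.mp hasymp 1 one_pos).and (eventually_gt_atTop (0:ℝ))).exists
  have hyim : ((y:ℂ) * Complex.I).im = y := by simp
  have hyU : ((y:ℂ) * Complex.I) ∈ U := by
    rw [hUdef]; exact mem_setOf.mpr (by rw [hyim]; exact hy0)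
  have hy0C : (y:ℂ) ≠ 0 := by exact_mod_cast hy0.ne'
  set r : ℝ := Real.sqrt (y^2 + 4*v) with hrdef
  have hr0 : 0 < r := Real.sqrt_pos.mpr (by positivity)
  have hr2 : r^2 = y^2 + 4*v := Real.sq_sqrt (by positivity)
  have hr2C : ((r:ℂ))^2 = (y:ℂ)^2 + 4*(v:ℂ) := by exact_mod_cast congrArg Complex.ofReal hr2
  have hsq' := hsq ((y:ℂ) * Complex.I) (by rw [hyim]; exact hy0)
  have hzero : (s ((y:ℂ)*Complex.I) - (r:ℂ)*Complex.I)
      * (s ((y:ℂ)*Complex.I) + (r:ℂ)*Complex.I) = 0 := by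
    linear_combination hsq' - Complex.I^2 * hr2C - 4*(v:ℂ) * Complex.I_sq
  have hcase : s ((y:ℂ)*Complex.I) = (r:ℂ)*Complex.I := by
    rcases mul_eq_zero.mp hzero with h | h
    · exact sub_eq_zero.mp h
    · exfalso
      have hmin : s ((y:ℂ)*Complex.I) = -((r:ℂ)*Complex.I) := eq_neg_of_add_eq_zero_left h
      have hratio : s ((y:ℂ)*Complex.I) / ((y:ℂ)*Complex.I) = ((-(r/y) : ℝ) : ℂ) := by
        rw [hmin]
        push_cast
        field_simp
      rw [Complex.dist_eq, hratio] at hy1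
      have hcast : (((-(r/y) : ℝ)) : ℂ) - 1 = (((-(r/y) - 1 : ℝ)) : ℂ) := by push_cast; ring
      rw [hcast, Complex.norm_real, Real.norm_eq_abs] at hy1
      have hry : 0 < r / y := div_pos hr0 hy0
      rw [abs_of_nonpos (by linarith)] at hy1
      linarith
  have hlow : ‖((y:ℂ)*Complex.I) - s ((y:ℂ)*Complex.I)‖ < a := by
    rw [hcase]
    have : ((y:ℂ)*Complex.I) - (r:ℂ)*Complex.I = (((y - r : ℝ)):ℂ) * Complex.I := by
      push_cast; ring
    rw [this, norm_mul, Complex.norm_real, Complex.norm_I, mul_one]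
    have hyr : y < r := by nlinarith
    have hra : r < y + a := by
      have h1 : y^2 + 4*v < (y+a)^2 := by nlinarith
      calc r = Real.sqrt (y^2+4*v) := hrdef
        _ < Real.sqrt ((y+a)^2) := Real.sqrt_lt_sqrt (by positivity) h1
        _ = y + a := Real.sqrt_sq (by positivity)
    rw [Real.norm_eq_abs, abs_of_nonpos (by linarith)]
    linarith
  intro z hz
  rcases lt_or_ge ‖z - s z‖ a with h | h
  · exact h
  · have hal : a ∈ Icc (‖((y:ℂ)*Complex.I) - s ((y:ℂ)*Complex.I)‖) (‖z - s z‖) :=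
      ⟨le_of_lt hlow, h⟩
    obtain ⟨x, hxU, hx⟩ := hUpre.intermediate_value hyU hz hfc hal
    exact absurd hx (hne x hxU)

/-- The Wigner semicircle distribution with mean `0` and variance `v`, given by the
density `√(4v - x²)/(2πv)` on `[-2√v, 2√v]` (the density vanishes elsewhere since the
square root of a negative number is `0`). -/
noncomputable def semicircleMeasure (v : ℝ) : Measure ℝ :=
  MeasureTheory.volume.withDensity fun x =>
    ENNReal.ofReal (Real.sqrt (4 * v - x ^ 2) / (2 * Real.pi * v))

/-- The Cauchy transform of the Wigner semicircle distribution with variance `v = σ²`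
equals `2/(z + √(z² - 4v))` on the upper half-plane, where `s z = √(z² - 4v)` is the
holomorphic branch of the square root with `s z ~ z` as `z → ∞`. -/
theorem semicircle_cauchy_transform (v : ℝ) (hv : 0 < v) (s : ℂ → ℂ)
    (hs : DifferentiableOn ℂ s {z : ℂ | 0 < z.im})
    (hsq : ∀ z : ℂ, 0 < z.im → s z ^ 2 = z ^ 2 - 4 * v)
    (hasymp : Tendsto (fun y : ℝ => s (y * Complex.I) / (y * Complex.I)) atTop (nhds 1)) :
    ∀ z : ℂ, 0 < z.im →
      ∫ x : ℝ, (z - (x : ℂ))⁻¹ ∂(semicircleMeasure v) = 2 / (z + s z) := by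
  intro z hz
  set a : ℝ := 2 * Real.sqrt v with hadef
  have ha : 0 < a := by
    have := Real.sqrt_pos.mpr hv; positivity
  have haC : ((a:ℝ):ℂ) ≠ 0 := by exact_mod_cast ha.ne'
  have ha2 : a^2 = 4*v := by rw [hadef, mul_pow, Real.sq_sqrt hv.le]; ring
  have ha2C : ((a:ℂ))^2 = 4*(v:ℂ) := by exact_mod_cast congrArg Complex.ofReal ha2
  have hvC : (4*(v:ℂ)) ≠ 0 := by
    have : (0:ℝ) < 4*v := by positivity
    exact_mod_cast this.ne'
  set p : ℂ := (z - s z)/(a:ℂ) with hpdef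
  set q : ℂ := (z + s z)/(a:ℂ) with hqdef
  have hp : ‖p‖ < 1 := by
    rw [hpdef, norm_div, Complex.norm_real, Real.norm_eq_abs, abs_of_pos ha, div_lt_one ha]
    exact small_root_norm v hv s hs hsq hasymp z hz
  have hmul : q * p = 1 := by
    have hnum : (z + s z) * (z - s z) = (a:ℂ)*(a:ℂ) := by
      linear_combination -ha2C - hsq z hz
    rw [hqdef, hpdef, div_mul_div_comm, hnum, div_self (mul_ne_zero haC haC)]
  have hppos : 0 < ‖p‖ := by
    refine norm_pos_iff.mpr fun h0 => ?_
    rw [h0, mul_zero] at hmul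
    exact one_ne_zero hmul.symm
  have hq : 1 < ‖q‖ := by
    have hnorm : ‖q‖ * ‖p‖ = 1 := by rw [← norm_mul, hmul, norm_one]
    nlinarith
  have hsum : q + p = 2 * z / (a:ℂ) := by rw [hqdef, hpdef]; ring
  have hzs : z + s z ≠ 0 := by
    intro h
    rw [hqdef, h] at hq; simp at hq; linarith
  -- density and its properties
  set ρ : ℝ → ℝ := fun x => Real.sqrt (4 * v - x ^ 2) / (2 * Real.pi * v) with hρdef
  have hρc : Continuous ρ := by
    apply Continuous.div_const
    exact Real.continuous_sqrt.comp (by continuity)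
  have hρ0 : ∀ x, 0 ≤ ρ x := fun x => div_nonneg (Real.sqrt_nonneg _)
    (by positivity)
  have hzx : ∀ x : ℝ, z - (x:ℂ) ≠ 0 := by
    intro x h
    have := congrArg Complex.im h
    simp at this
    rw [this] at hz; exact lt_irrefl _ hz
  have hzc : ∀ x : ℝ, z - (a:ℂ)*(x:ℂ) ≠ 0 := by
    intro x h
    have := congrArg Complex.im h
    simp at this
    rw [this] at hz; exact lt_irrefl _ hz
  -- step A : withDensity to weighted Lebesgue integral
  have stepA : ∫ x : ℝ, (z - (x : ℂ))⁻¹ ∂(semicircleMeasure v)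
      = ∫ x : ℝ, ((ρ x : ℂ)) * (z - (x : ℂ))⁻¹ := by
    have hmeas : semicircleMeasure v
        = volume.withDensity (fun x => ((Real.toNNReal (ρ x) : ℝ≥0) : ℝ≥0∞)) := rfl
    have hfm : Measurable fun x : ℝ => Real.toNNReal (ρ x) :=
      measurable_real_toNNReal.comp hρc.measurable
    rw [hmeas, integral_withDensity_eq_integral_smul hfm (fun x : ℝ => (z - (x : ℂ))⁻¹)]
    congr 1
    funext x
    rw [NNReal.smul_def, Real.coe_toNNReal _ (hρ0 x), Complex.real_smul]
  rw [stepA]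
  -- step B : restrict to [-a, a]
  have hsupp : ∀ x : ℝ, x ∉ Icc (-a) a → ((ρ x : ℂ)) * (z - (x : ℂ))⁻¹ = 0 := by
    intro x hx
    have hρx : ρ x = 0 := by
      rw [hρdef]
      have : Real.sqrt (4*v - x^2) = 0 := by
        rw [Real.sqrt_eq_zero']
        simp only [mem_Icc, not_and_or, not_le] at hx
        rcases hx with h | h
        · nlinarith
        · nlinarith
      simp [this]
    rw [hρx]; simp
  rw [← setIntegral_eq_integral_of_forall_compl_eq_zero hsupp,
    integral_Icc_eq_integral_Ioc, ← intervalIntegral.integral_of_le (by linarith : -a ≤ a)]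
  -- step C : substitution x = a cos θ
  have hg : Continuous (fun x : ℝ => ((ρ x : ℂ)) * (z - (x : ℂ))⁻¹) := by
    apply Continuous.mul
    · exact Complex.continuous_ofReal.comp hρc
    · exact ((continuous_const.sub Complex.continuous_ofReal).inv₀ hzx)
  have hsub := intervalIntegral.integral_comp_smul_deriv
    (a := 0) (b := Real.pi)
    (f := fun θ : ℝ => a * Real.cos θ) (f' := fun θ : ℝ => -(a * Real.sin θ))
    (g := fun x : ℝ => ((ρ x : ℂ)) * (z - (x : ℂ))⁻¹)
    (fun θ _ => by simpa [mul_comm, mul_neg] using (Real.hasDerivAt_cos θ).const_mul a)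
    ((continuous_const.mul Real.continuous_sin).neg).continuousOn hg
  simp only [Real.cos_zero, mul_one, Real.cos_pi, mul_neg_one] at hsub
  have hflip : (∫ x in (-a)..a, ((ρ x : ℂ)) * (z - (x : ℂ))⁻¹)
      = ∫ θ in (0:ℝ)..Real.pi, (a * Real.sin θ) •
          (((ρ (a * Real.cos θ) : ℂ)) * (z - ((a * Real.cos θ : ℝ) : ℂ))⁻¹) := by
    rw [intervalIntegral.integral_symm, ← hsub, ← intervalIntegral.integral_neg]
    apply intervalIntegral.integral_congr
    intro θ _
    simp [Function.comp, neg_smul]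
  rw [hflip]
  -- rewrite the integrand using trig identities
  have hiden : ∀ θ ∈ uIcc (0:ℝ) Real.pi,
      (a * Real.sin θ) • (((ρ (a * Real.cos θ) : ℂ)) * (z - ((a * Real.cos θ : ℝ) : ℂ))⁻¹)
      = ((a^2/(2*Real.pi*v) : ℝ) : ℂ) *
          (((Real.sin θ : ℂ))^2 * (z - (a:ℂ) * (Real.cos θ : ℂ))⁻¹) := by
    intro θ hθ
    rw [uIcc_of_le Real.pi_pos.le] at hθ
    have hsin : 0 ≤ Real.sin θ := Real.sin_nonneg_of_nonneg_of_le_pi hθ.1 hθ.2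
    have htrig : 4*v - (a*Real.cos θ)^2 = (a*Real.sin θ)^2 := by
      linear_combination (-(a^2)) * Real.sin_sq_add_cos_sq θ - ha2
    have hρval : ρ (a * Real.cos θ) = a * Real.sin θ / (2*Real.pi*v) := by
      rw [hρdef]
      simp only
      rw [htrig, Real.sqrt_sq (by positivity)]
    rw [hρval, Complex.real_smul]
    push_cast
    ring
  rw [intervalIntegral.integral_congr hiden, intervalIntegral.integral_const_mul]
  -- step D : double the interval
  have hIcont : Continuous (fun θ : ℝ => ((Real.sin θ : ℂ))^2 * (z - (a:ℂ) * (Real.cos θ : ℂ))⁻¹) := by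
    apply Continuous.mul
    · exact (Complex.continuous_ofReal.comp Real.continuous_sin).pow 2
    · exact ((continuous_const.sub
        (continuous_const.mul (Complex.continuous_ofReal.comp Real.continuous_cos))).inv₀
        (fun θ => hzc (Real.cos θ)))
  have hrefl : (∫ θ in Real.pi..(2*Real.pi),
        ((Real.sin θ : ℂ))^2 * (z - (a:ℂ) * (Real.cos θ : ℂ))⁻¹)
      = ∫ θ in (0:ℝ)..Real.pi, ((Real.sin θ : ℂ))^2 * (z - (a:ℂ) * (Real.cos θ : ℂ))⁻¹ := by
    have hcomp := intervalIntegral.integral_comp_sub_left (a := 0) (b := Real.pi)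
      (fun θ : ℝ => ((Real.sin θ : ℂ))^2 * (z - (a:ℂ) * (Real.cos θ : ℂ))⁻¹) (2*Real.pi)
    have h2 : 2*Real.pi - Real.pi = Real.pi := by ring
    have h0 : 2*Real.pi - 0 = 2*Real.pi := by ring
    rw [h2, h0] at hcomp
    rw [← hcomp]
    apply intervalIntegral.integral_congr
    intro θ _
    simp only
    have hs2 : Real.sin (2*Real.pi - θ) = - Real.sin θ := by
      rw [Real.sin_sub]; simp
    have hc2 : Real.cos (2*Real.pi - θ) = Real.cos θ := by
      rw [Real.cos_sub]; simp
    rw [hs2, hc2]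
    push_cast
    ring
  have hsplit : (∫ θ in (0:ℝ)..(2*Real.pi),
        ((Real.sin θ : ℂ))^2 * (z - (a:ℂ) * (Real.cos θ : ℂ))⁻¹)
      = 2 * ∫ θ in (0:ℝ)..Real.pi, ((Real.sin θ : ℂ))^2 * (z - (a:ℂ) * (Real.cos θ : ℂ))⁻¹ := by
    rw [← intervalIntegral.integral_add_adjacent_intervals
      (hIcont.intervalIntegrable 0 Real.pi) (hIcont.intervalIntegrable Real.pi (2*Real.pi)),
      hrefl]
    ring
  have hkey := key_interval ha hz hmul hsum hp hq
  have hhalf : (∫ θ in (0:ℝ)..Real.pi, ((Real.sin θ : ℂ))^2 * (z - (a:ℂ) * (Real.cos θ : ℂ))⁻¹)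
      = Real.pi * p / (a:ℂ) := by
    have h2 := hsplit.symm.trans hkey
    linear_combination h2/2
  rw [hhalf]
  -- final algebra
  rw [hpdef]
  have hπ : ((Real.pi : ℝ):ℂ) ≠ 0 := by exact_mod_cast Real.pi_ne_zero
  have hv2 : ((v:ℝ):ℂ) ≠ 0 := by exact_mod_cast hv.ne'
  rw [eq_div_iff hzs]
  push_cast
  field_simp
  linear_combination (-1 : ℂ) * hsq z hz
end

section
/- The R-transform of the Wigner semicircle distribution with variance σ² is R(z) = σ²z; that is, the function V(z) = 1/z + σ²z satisfies G(V(z)) = z for z in a neighborhood of 0 in the lower half plane, where G is the Cauchy transform of μ_{W,σ²}. -/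
open MeasureTheory Complex

section SemicircleAux

open intervalIntegral Real

noncomputable def scT (m : ℕ) : ℝ := ∫ θ in (-(Real.pi/2))..(Real.pi/2), Real.sin θ ^ m

lemma scT_zero : scT 0 = Real.pi := by
  simp [scT]

lemma scT_one : scT 1 = 0 := by
  simp [scT, integral_sin]

lemma scT_rec (m : ℕ) : scT (m + 2) = (m + 1) / (m + 2) * scT m := by
  unfold scT
  rw [integral_sin_pow m]
  simp [Real.cos_pi_div_two]

lemma scT_odd (n : ℕ) : scT (2 * n + 1) = 0 := by
  induction n with
  | zero => simpa using scT_one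
  | succ k ih =>
      have : 2 * (k + 1) + 1 = (2 * k + 1) + 2 := by ring
      rw [this, scT_rec, ih, mul_zero]

noncomputable def scI (v : ℝ) (k : ℕ) : ℝ :=
  ∫ x in (-(2*Real.sqrt v))..(2*Real.sqrt v), x ^ k * Real.sqrt (4*v - x^2)

lemma scI_eq (v : ℝ) (hv : 0 < v) (k : ℕ) :
    scI v k = (2*Real.sqrt v) ^ (k+2) * ((k+2 : ℝ))⁻¹ * scT k := by
  have hsv : (0:ℝ) < Real.sqrt v := Real.sqrt_pos.2 hv
  set a : ℝ := 2 * Real.sqrt v with ha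
  have ha2 : a ^ 2 = 4 * v := by
    rw [ha, mul_pow, Real.sq_sqrt hv.le]; ring
  -- substitution x = a sin θ
  have hsub : scI v k
      = ∫ θ in (-(Real.pi/2))..(Real.pi/2),
          (a * Real.cos θ) • ((fun x => x ^ k * Real.sqrt (4*v - x^2)) (a * Real.sin θ)) := by
    have key := intervalIntegral.integral_comp_smul_deriv
      (a := -(Real.pi/2)) (b := Real.pi/2)
      (f := fun θ => a * Real.sin θ) (f' := fun θ => a * Real.cos θ)
      (g := fun x => x ^ k * Real.sqrt (4*v - x^2))
      (fun θ _ => (Real.hasDerivAt_sin θ).const_mul a)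
      (by fun_prop)
      (by fun_prop)
    simp only [Real.sin_pi_div_two, Real.sin_neg, mul_one, mul_neg, Function.comp] at key
    rw [scI, ← key]
  rw [hsub]
  -- simplify integrand on the interval
  have hcongr : ∀ θ ∈ Set.uIcc (-(Real.pi/2)) (Real.pi/2),
      (a * Real.cos θ) • ((fun x => x ^ k * Real.sqrt (4*v - x^2)) (a * Real.sin θ))
        = a ^ (k+2) * (Real.sin θ ^ k * Real.cos θ ^ 2) := by
    intro θ hθ
    rw [Set.uIcc_of_le (by linarith [Real.pi_pos] : -(Real.pi/2) ≤ Real.pi/2)] at hθ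
    have hcos : 0 ≤ Real.cos θ := Real.cos_nonneg_of_mem_Icc hθ
    have h1 : 4*v - (a * Real.sin θ)^2 = (a * Real.cos θ)^2 := by
      have := Real.sin_sq_add_cos_sq θ
      nlinarith [ha2]
    have h2 : Real.sqrt (4*v - (a * Real.sin θ)^2) = a * Real.cos θ := by
      rw [h1, Real.sqrt_sq (by positivity)]
    simp only [smul_eq_mul]
    rw [h2, mul_pow]
    ring
  rw [intervalIntegral.integral_congr hcongr]
  rw [intervalIntegral.integral_const_mul]
  have hsplit : ∀ θ : ℝ, Real.sin θ ^ k * Real.cos θ ^ 2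
      = Real.sin θ ^ k - Real.sin θ ^ (k+2) := by
    intro θ
    have := Real.sin_sq_add_cos_sq θ
    have : Real.cos θ ^ 2 = 1 - Real.sin θ ^ 2 := by linarith
    rw [this, pow_add]; ring
  rw [intervalIntegral.integral_congr (fun θ _ => hsplit θ)]
  rw [intervalIntegral.integral_sub (by apply Continuous.intervalIntegrable; fun_prop)
      (by apply Continuous.intervalIntegrable; fun_prop)]
  have : (∫ θ in (-(Real.pi/2))..(Real.pi/2), Real.sin θ ^ k) = scT k := rfl
  have h2 : (∫ θ in (-(Real.pi/2))..(Real.pi/2), Real.sin θ ^ (k+2)) = scT (k+2) := rfl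
  rw [this, h2, scT_rec]
  have hk : ((k:ℝ) + 2) ≠ 0 := by positivity
  field_simp
  ring

lemma catalan_rec (n : ℕ) : (n+2) * catalan (n+1) = 2*(2*n+1) * catalan n := by
  have h1 := succ_mul_catalan_eq_centralBinom (n+1)
  have h2 := Nat.succ_mul_centralBinom_succ n
  have h3 := succ_mul_catalan_eq_centralBinom n
  apply Nat.eq_of_mul_eq_mul_left (show 0 < n + 1 by omega)
  calc (n+1) * ((n+2) * catalan (n+1)) = (n+1) * ((n+1+1) * catalan (n+1)) := by ring_nf
    _ = (n+1) * (n+1).centralBinom := by rw [h1]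
    _ = 2*(2*n+1) * n.centralBinom := h2
    _ = 2*(2*n+1) * ((n+1) * catalan n) := by rw [h3]
    _ = (n+1) * (2*(2*n+1) * catalan n) := by ring

lemma catalan_le_four_pow (n : ℕ) : catalan n ≤ 4 ^ n := by
  have h1 : catalan n ≤ n.centralBinom := by
    rw [catalan_eq_centralBinom_div]; exact Nat.div_le_self _ _
  have h2 : n.centralBinom ≤ 4 ^ n := by
    have : n.centralBinom ≤ ∑ m ∈ Finset.range (2*n + 1), (2*n).choose m := by
      apply Finset.single_le_sum (f := fun m => (2*n).choose m) (fun i _ => Nat.zero_le _)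
      simp [Finset.mem_range]; omega
    rw [Nat.sum_range_choose] at this
    calc n.centralBinom ≤ 2 ^ (2*n) := this
      _ = 4 ^ n := by rw [pow_mul]; norm_num
  omega

noncomputable def scM (v : ℝ) (k : ℕ) : ℝ := scI v k / (2 * Real.pi * v)

lemma scM_odd (v : ℝ) (hv : 0 < v) (n : ℕ) : scM v (2*n+1) = 0 := by
  rw [scM, scI_eq v hv, scT_odd]; simp

lemma scM_even (v : ℝ) (hv : 0 < v) (n : ℕ) : scM v (2*n) = catalan n * v ^ n := by
  have hpi := Real.pi_pos
  have hsv : (0:ℝ) < Real.sqrt v := Real.sqrt_pos.2 hv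
  have ha2 : (2 * Real.sqrt v) ^ 2 = 4 * v := by
    rw [mul_pow, Real.sq_sqrt hv.le]; ring
  induction n with
  | zero =>
      rw [show 2*0 = 0 by ring, scM, scI_eq v hv, scT_zero]
      rw [show (0:ℕ)+2 = 2 by ring, ha2]
      push_cast
      field_simp
      norm_num
  | succ k ih =>
      have hrec : scI v (2*k+2) = (4 * v) * ((2*(k:ℝ)+1) / (2*k+4)) * scI v (2*k) := by
        rw [scI_eq v hv (2*k+2), scI_eq v hv (2*k), scT_rec]
        have e1 : (2 * Real.sqrt v) ^ (2*k+2+2) = (4*v) * (2 * Real.sqrt v) ^ (2*k+2) := by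
          rw [pow_add, ha2]; ring
        rw [e1]
        push_cast
        have h1 : (2*(k:ℝ)+2) ≠ 0 := by positivity
        have h2 : (2*(k:ℝ)+2+2) ≠ 0 := by positivity
        field_simp
        ring
      have goal1 : scM v (2*(k+1)) = (4 * v) * ((2*(k:ℝ)+1) / (2*k+4)) * scM v (2*k) := by
        rw [scM, scM, show 2*(k+1) = 2*k+2 by ring, hrec]
        ring
      rw [goal1, ih]
      have hcat : ((k:ℝ)+2) * catalan (k+1) = 2*(2*(k:ℝ)+1) * catalan k := by
        exact_mod_cast congrArg (fun x : ℕ => (x:ℝ)) (catalan_rec k)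
      have h2 : (2*(k:ℝ)+4) ≠ 0 := by positivity
      rw [pow_succ]
      field_simp
      linear_combination (-2) * hcat

lemma semicircle_integral_eq (v : ℝ) (hv : 0 < v) (g : ℝ → ℂ) :
    ∫ x, g x ∂(semicircleMeasure v)
      = ∫ x in (-(2*Real.sqrt v))..(2*Real.sqrt v),
          (Real.sqrt (4*v - x^2) / (2*Real.pi*v)) • g x := by
  have hpi := Real.pi_pos
  set ρ : ℝ → ℝ := fun x => Real.sqrt (4*v - x^2) / (2*Real.pi*v) with hρ
  have hρcont : Continuous ρ := by fun_prop
  have hmeas : Measurable (fun x => (ρ x).toNNReal) :=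
    (continuous_real_toNNReal.comp hρcont).measurable
  have h1 : semicircleMeasure v
      = MeasureTheory.volume.withDensity (fun x => ((ρ x).toNNReal : ENNReal)) := by
    unfold semicircleMeasure
    rfl
  rw [h1, integral_withDensity_eq_integral_smul hmeas]
  have hρnn : ∀ x, 0 ≤ ρ x := fun x => by positivity
  have h2 : ∀ x, (ρ x).toNNReal • g x = ρ x • g x := by
    intro x
    rw [NNReal.smul_def, Real.coe_toNNReal _ (hρnn x)]
  simp_rw [h2]
  set a : ℝ := 2 * Real.sqrt v with ha
  have hsv : (0:ℝ) < Real.sqrt v := Real.sqrt_pos.2 hv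
  have haa : -a ≤ a := by rw [ha]; linarith
  have hzero : ∀ x ∉ Set.Ioc (-a) a, ρ x • g x = 0 := by
    intro x hx
    have hx2 : 4*v - x^2 ≤ 0 := by
      simp only [Set.mem_Ioc, not_and_or, not_lt, not_le] at hx
      have ha2 : a ^ 2 = 4 * v := by rw [ha, mul_pow, Real.sq_sqrt hv.le]; ring
      rcases hx with h | h
      · nlinarith
      · nlinarith
    have : ρ x = 0 := by
      rw [hρ]; simp [Real.sqrt_eq_zero'.2 hx2]
    rw [this, zero_smul]
  have hind : (fun x => ρ x • g x) = (Set.Ioc (-a) a).indicator (fun x => ρ x • g x) := by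
    funext x
    by_cases hx : x ∈ Set.Ioc (-a) a
    · rw [Set.indicator_of_mem hx]
    · rw [Set.indicator_of_notMem hx, hzero x hx]
  rw [intervalIntegral.integral_of_le haa, ← MeasureTheory.integral_indicator measurableSet_Ioc, ← hind]

lemma semicircle_hasSum (v : ℝ) (hv : 0 < v) (W : ℂ)
    (hW : 2 * Real.sqrt v < ‖W‖) :
    HasSum (fun k => ((scM v k : ℝ) : ℂ) * (W⁻¹)^(k+1))
      (∫ x, ((W - (x:ℂ))⁻¹) ∂(semicircleMeasure v)) := by
  have hpi := Real.pi_pos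
  have hsv : (0:ℝ) < Real.sqrt v := Real.sqrt_pos.2 hv
  set a : ℝ := 2 * Real.sqrt v with ha
  have hapos : 0 < a := by positivity
  have hWpos : 0 < ‖W‖ := lt_trans hapos hW
  have hW0 : W ≠ 0 := by
    intro h; rw [h] at hWpos; simp at hWpos
  have hrW : ‖W⁻¹‖ = (‖W‖)⁻¹ := by
    simp
  have hq : a * ‖W⁻¹‖ < 1 := by
    rw [hrW]
    rw [mul_inv_lt_iff₀ hWpos] at *
    · simpa using hW
  set ρ : ℝ → ℝ := fun x => Real.sqrt (4*v - x^2) / (2*Real.pi*v) with hρ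
  have hρcont : Continuous ρ := by fun_prop
  have hρnn : ∀ x, 0 ≤ ρ x := fun x => by positivity
  set C : ℝ := Real.sqrt (4*v) / (2*Real.pi*v) with hC
  have hCpos : 0 < C := by positivity
  have hρle : ∀ x, ρ x ≤ C := by
    intro x
    apply div_le_div_of_nonneg_right ?_ (by positivity)
    · exact Real.sqrt_le_sqrt (by nlinarith [sq_nonneg x])
  -- the continuous maps
  set F : ℕ → C(ℝ, ℂ) := fun k =>
    ⟨fun x => (ρ x) • (((x:ℂ))^k * (W⁻¹)^(k+1)), by fun_prop⟩ with hF
  rw [semicircle_integral_eq v hv]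
  -- sup-norm bound
  have hbound : ∀ k, ∀ x ∈ Set.uIcc (-a) a, ‖F k x‖ ≤ (C * ‖W⁻¹‖) * (a * ‖W⁻¹‖)^k := by
    intro k x hx
    rw [Set.uIcc_of_le (by linarith : -a ≤ a)] at hx
    have hxa : |x| ≤ a := abs_le.2 ⟨hx.1, hx.2⟩
    have hnorm : ‖F k x‖ = ρ x * (|x|^k * ‖W⁻¹‖^(k+1)) := by
      rw [hF]
      simp only [ContinuousMap.coe_mk]
      rw [norm_smul, norm_mul, norm_pow, Real.norm_eq_abs, _root_.abs_of_nonneg (hρnn x),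
        Complex.norm_real, Real.norm_eq_abs, norm_pow]
    rw [hnorm]
    calc ρ x * (|x|^k * ‖W⁻¹‖^(k+1)) ≤ C * (a^k * ‖W⁻¹‖^(k+1)) := by
          apply mul_le_mul (hρle x) ?_ (by positivity) hCpos.le
          apply mul_le_mul_of_nonneg_right (pow_le_pow_left₀ (abs_nonneg x) hxa k) (by positivity)
      _ = (C * ‖W⁻¹‖) * (a * ‖W⁻¹‖)^k := by rw [mul_pow, pow_succ]; ring
  have hsummable : Summable fun k : ℕ =>
      ‖(F k).restrict (⟨Set.uIcc (-a) a, isCompact_uIcc⟩ : TopologicalSpace.Compacts ℝ)‖ := by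
    apply Summable.of_nonneg_of_le (fun k => norm_nonneg _)
      (fun k => ?_) (((summable_geometric_of_lt_one (by positivity) hq)).mul_left (C * ‖W⁻¹‖))
    apply ContinuousMap.norm_le _ (by positivity) |>.2
    rintro ⟨x, hx⟩
    exact hbound k x hx
  have hs := hasSum_intervalIntegral_of_summable_norm (a := -a) (b := a) hsummable
  -- identify the sum of the series pointwise
  have hsum_eq : ∀ x ∈ Set.uIcc (-a) a,
      (∑' k, F k x) = ρ x • (W - (x:ℂ))⁻¹ := by
    intro x hx
    rw [Set.uIcc_of_le (by linarith : -a ≤ a)] at hx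
    have hxa : |x| ≤ a := abs_le.2 ⟨hx.1, hx.2⟩
    have hxq : ‖(x:ℂ) * W⁻¹‖ < 1 := by
      rw [norm_mul, Complex.norm_real, Real.norm_eq_abs]
      calc |x| * ‖W⁻¹‖ ≤ a * ‖W⁻¹‖ := by
            apply mul_le_mul_of_nonneg_right hxa (norm_nonneg _)
        _ < 1 := hq
    simp only [hF, ContinuousMap.coe_mk]
    have h1 : ∀ k : ℕ, (ρ x) • (((x:ℂ))^k * (W⁻¹)^(k+1))
        = ((ρ x : ℂ)) * ((((x:ℂ) * W⁻¹)^k) * W⁻¹) := by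
      intro k
      rw [Complex.real_smul, mul_pow, pow_succ]
      ring
    simp_rw [h1]
    rw [tsum_mul_left, tsum_mul_right, tsum_geometric_of_norm_lt_one hxq]
    rw [Complex.real_smul]
    congr 1
    rw [← mul_inv_rev]
    congr 1
    field_simp
  rw [intervalIntegral.integral_congr hsum_eq] at hs
  -- identify each term
  have hterm : ∀ k, (∫ x in (-a)..a, F k x) = ((scM v k : ℝ) : ℂ) * (W⁻¹)^(k+1) := by
    intro k
    have h1 : ∀ x, F k x = ((ρ x * x^k : ℝ) : ℂ) * (W⁻¹)^(k+1) := by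
      intro x
      simp only [hF, ContinuousMap.coe_mk, Complex.real_smul]
      push_cast
      ring
    rw [intervalIntegral.integral_congr (fun x _ => h1 x)]
    rw [intervalIntegral.integral_mul_const, intervalIntegral.integral_ofReal]
    congr 2
    have h2 : ∀ x : ℝ, ρ x * x^k = (x^k * Real.sqrt (4*v - x^2)) * (2*Real.pi*v)⁻¹ := by
      intro x
      rw [hρ]
      field_simp
    rw [intervalIntegral.integral_congr (fun x _ => h2 x)]
    rw [intervalIntegral.integral_mul_const]
    rw [scM, scI]
    rw [div_eq_mul_inv]
  simp_rw [hterm] at hs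
  exact hs

lemma catalan_norm_term_le (t : ℂ) (n : ℕ) :
    ‖((catalan n : ℂ)) * t^n‖ ≤ (4*‖t‖)^n := by
  rw [norm_mul, norm_pow, mul_pow]
  have h1 : ‖((catalan n : ℂ))‖ = (catalan n : ℝ) := by
    simp
  rw [h1]
  apply mul_le_mul_of_nonneg_right ?_ (by positivity)
  calc (catalan n : ℝ) ≤ ((4^n : ℕ) : ℝ) := by exact_mod_cast catalan_le_four_pow n
    _ = 4^n := by push_cast; ring

lemma catalan_tsum_eq (t Q : ℂ) (ht : ‖t‖ ≤ 1/16) (hQfe : Q = 1 + t * Q^2) (hQ2 : ‖Q‖ ≤ 2)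
    (S : ℂ) (hS : HasSum (fun n => ((catalan n : ℂ)) * t^n) S) : S = Q := by
  have hgeom : (4*‖t‖) < 1 := by
    have := norm_nonneg t; linarith
  have hsummnorm : Summable (fun n => ‖((catalan n : ℂ)) * t^n‖) := by
    apply Summable.of_nonneg_of_le (fun n => norm_nonneg _) (catalan_norm_term_le t)
    exact summable_geometric_of_lt_one (by positivity) hgeom
  -- bound on S
  have hSnorm : ‖S‖ ≤ 2 := by
    rw [← hS.tsum_eq]
    calc ‖∑' n, ((catalan n : ℂ)) * t^n‖ ≤ ∑' n, ‖((catalan n : ℂ)) * t^n‖ :=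
          norm_tsum_le_tsum_norm hsummnorm
      _ ≤ ∑' n : ℕ, (4*‖t‖)^n := by
          apply Summable.tsum_le_tsum (catalan_norm_term_le t) hsummnorm
          exact summable_geometric_of_lt_one (by positivity) hgeom
      _ = (1 - 4*‖t‖)⁻¹ := tsum_geometric_of_lt_one (by positivity) hgeom
      _ ≤ 2 := by
          rw [inv_le_comm₀ (by linarith [norm_nonneg t]) (by norm_num)]
          linarith [norm_nonneg t]
  -- functional equation for S
  have hSfe : S = 1 + t * S^2 := by
    have hS2 : S^2 = ∑' n : ℕ, ((catalan (n+1) : ℂ)) * t^n := by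
      rw [← hS.tsum_eq, sq]
      rw [tsum_mul_tsum_eq_tsum_sum_antidiagonal_of_summable_norm hsummnorm hsummnorm]
      congr 1
      funext n
      rw [catalan_succ']
      push_cast
      rw [Finset.sum_mul]
      apply Finset.sum_congr rfl
      intro ij hij
      have : ij.1 + ij.2 = n := Finset.HasAntidiagonal.mem_antidiagonal.1 hij
      rw [← this, pow_add]
      ring
    have h1 : HasSum (fun n => ((catalan (n+1) : ℂ)) * t^(n+1)) (S - 1) := by
      refine (hasSum_nat_add_iff (f := fun n => ((catalan n : ℂ)) * t^n) 1).2 ?_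
      simpa using hS
    have h2 : t * S^2 = S - 1 := by
      rw [hS2, ← tsum_mul_left]
      rw [← h1.tsum_eq]
      congr 1
      funext n
      rw [pow_succ]
      ring
    rw [h2]; ring
  -- uniqueness of the small root
  by_contra hne
  have hfact : (S - Q) * (1 - t * (S + Q)) = 0 := by
    have : S - Q = t * (S^2 - Q^2) := by
      calc S - Q = (1 + t*S^2) - (1 + t*Q^2) := by rw [← hSfe, ← hQfe]
        _ = t * (S^2 - Q^2) := by ring
    calc (S - Q) * (1 - t * (S + Q)) = (S - Q) - t * (S^2 - Q^2) := by ring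
      _ = 0 := by rw [← this]; ring
  rcases mul_eq_zero.1 hfact with h | h
  · exact hne (sub_eq_zero.1 h)
  · have h1 : (1:ℂ) = t * (S + Q) := sub_eq_zero.1 h
    have h2 : (1:ℝ) = ‖t * (S + Q)‖ := by rw [← h1]; simp
    have h3 : ‖t * (S + Q)‖ ≤ ‖t‖ * (‖S‖ + ‖Q‖) := by
      rw [norm_mul]
      exact mul_le_mul_of_nonneg_left (norm_add_le _ _) (norm_nonneg t)
    have h4 : ‖t‖ * (‖S‖ + ‖Q‖) ≤ (1/16) * 4 := by
      apply mul_le_mul ht (by linarith) (by positivity) (by norm_num)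
    linarith

end SemicircleAux

/-- The R-transform of the Wigner semicircle distribution with variance `v = σ²` is
`R(z) = v·z`: the function `V(z) = 1/z + v·z` satisfies `G(V(z)) = z` for `z` in a
neighborhood of `0` in the lower half-plane, where `G` is the Cauchy transform of the
semicircle distribution. -/
theorem semicircle_R_transform (v : ℝ) (hv : 0 < v) :
    ∃ ε > (0 : ℝ), ∀ z : ℂ, z.im < 0 → ‖z‖ < ε →
      ∫ x : ℝ, ((z⁻¹ + v * z) - (x : ℂ))⁻¹ ∂(semicircleMeasure v) = z := by
  have hsv : (0:ℝ) < Real.sqrt v := Real.sqrt_pos.2 hv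
  have hsv2 : Real.sqrt v ^ 2 = v := Real.sq_sqrt hv.le
  refine ⟨(5*Real.sqrt v + v + 1)⁻¹, by positivity, ?_⟩
  intro z him habs
  have hz0 : z ≠ 0 := by
    intro h; rw [h] at him; simp at him
  have hzpos : 0 < ‖z‖ := norm_pos_iff.mpr hz0
  set W : ℂ := z⁻¹ + (v:ℂ) * z with hWdef
  have hc : (0:ℝ) < 5*Real.sqrt v + v + 1 := by positivity
  have hzinv : 5*Real.sqrt v + v + 1 < ‖z‖⁻¹ := by
    have h := (inv_lt_inv₀ hzpos (by positivity)).2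
    have h2 : ((5*Real.sqrt v + v + 1)⁻¹)⁻¹ < ‖z‖⁻¹ := by
      apply (inv_lt_inv₀ (by positivity) hzpos).2 habs
    rwa [inv_inv] at h2
  have hvz : v * ‖z‖ < 1 := by
    have h1 : ‖z‖ < (5*Real.sqrt v + v + 1)⁻¹ := habs
    have h2 : v * ‖z‖ < v * (5*Real.sqrt v + v + 1)⁻¹ :=
      (mul_lt_mul_of_pos_left h1 hv)
    have h3 : v * (5*Real.sqrt v + v + 1)⁻¹ < 1 := by
      rw [mul_inv_lt_iff₀ hc]
      nlinarith
    linarith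
  have hWlb : 4 * Real.sqrt v + v < ‖W‖ := by
    have htri : ‖z⁻¹‖ ≤ ‖W‖ + ‖(v:ℂ)*z‖ := by
      have he : z⁻¹ = W - (v:ℂ)*z := by rw [hWdef]; ring
      rw [he]
      exact norm_sub_le _ _
    have h1 : ‖z⁻¹‖ = ‖z‖⁻¹ := norm_inv _
    have h2 : ‖(v:ℂ)*z‖ = v * ‖z‖ := by
      rw [norm_mul, Complex.norm_real, Real.norm_eq_abs, abs_of_pos hv]
    rw [h1, h2] at htri
    have h3 : v * ‖z‖ < 1 := hvz
    linarith
  have hW2 : 2 * Real.sqrt v < ‖W‖ := by linarith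
  have hW4 : 4 * Real.sqrt v < ‖W‖ := by linarith
  have hWpos : 0 < ‖W‖ := by linarith
  have hW0 : W ≠ 0 := by
    intro h; rw [h] at hWpos; simp at hWpos
  -- the series
  have hG := semicircle_hasSum v hv W hW2
  set G : ℂ := ∫ x : ℝ, ((W - (x:ℂ))⁻¹) ∂(semicircleMeasure v) with hGdef
  set t : ℂ := (v:ℂ) * (W⁻¹)^2 with htdef
  have heven : HasSum (fun n => ((catalan n : ℂ)) * t^n * W⁻¹) G := by
    have hinj : Function.Injective (fun n : ℕ => 2*n) := fun a b h => by dsimp only at h; omega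
    have hzero : ∀ x ∉ Set.range (fun n : ℕ => 2*n),
        ((scM v x : ℝ):ℂ) * (W⁻¹)^(x+1) = 0 := by
      intro x hx
      have hodd : ∃ k, x = 2*k+1 := by
        rcases Nat.even_or_odd x with he | ho
        · exfalso; apply hx; rcases he with ⟨k,hk⟩; exact ⟨k, by dsimp only; omega⟩
        · rcases ho with ⟨k,hk⟩; exact ⟨k, by omega⟩
      rcases hodd with ⟨k, rfl⟩
      rw [scM_odd v hv k]
      simp
    have h := (hinj.hasSum_iff hzero).2 hG
    have heq : (fun n : ℕ => ((scM v (2*n) : ℝ):ℂ) * (W⁻¹)^(2*n+1))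
        = (fun n : ℕ => ((catalan n : ℂ)) * t^n * W⁻¹) := by
      funext n
      rw [scM_even v hv n]
      push_cast
      rw [pow_succ, pow_mul, htdef, mul_pow]
      ring
    rw [← heq]
    exact h
  have hS : HasSum (fun n => ((catalan n : ℂ)) * t^n) (G * W) := by
    have h := heven.mul_right W
    have heq : (fun n => ((catalan n : ℂ)) * t^n * W⁻¹ * W)
        = (fun n => ((catalan n : ℂ)) * t^n) := by
      funext n
      rw [mul_assoc, inv_mul_cancel₀ hW0, mul_one]
    rwa [heq] at h
  -- bounds
  have hWinv : ‖W⁻¹‖ ≤ (4 * Real.sqrt v)⁻¹ := by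
    rw [norm_inv]
    exact inv_anti₀ (by positivity) hW4.le
  have htnorm : ‖t‖ ≤ 1/16 := by
    rw [htdef, norm_mul, norm_pow, Complex.norm_real, Real.norm_eq_abs, abs_of_pos hv]
    calc v * ‖W⁻¹‖^2 ≤ v * ((4 * Real.sqrt v)⁻¹)^2 := by
          apply mul_le_mul_of_nonneg_left (pow_le_pow_left₀ (norm_nonneg _) hWinv 2) hv.le
      _ = 1/16 := by
          have h16 : (4*Real.sqrt v)^2 = 16*v := by nlinarith [hsv2]
          rw [inv_pow, h16]
          field_simp
  have hWz : W * z = 1 + (v:ℂ)*z^2 := by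
    rw [hWdef]
    field_simp
  have hQfe : W * z = 1 + t * (W*z)^2 := by
    have h1 : t * (W*z)^2 = (v:ℂ)*z^2 := by
      rw [htdef]
      field_simp
    rw [h1, hWz]
  have hQ2 : ‖W * z‖ ≤ 2 := by
    rw [hWz]
    calc ‖1 + (v:ℂ)*z^2‖ ≤ ‖(1:ℂ)‖ + ‖(v:ℂ)*z^2‖ := norm_add_le _ _
      _ = 1 + v * ‖z‖^2 := by
          rw [norm_one, norm_mul, norm_pow, Complex.norm_real, Real.norm_eq_abs,
            abs_of_pos hv]
      _ ≤ 2 := by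
          have hz1 : ‖z‖ ≤ 1 := by
            have : (5*Real.sqrt v + v + 1)⁻¹ ≤ 1 := by
              rw [inv_le_one_iff₀]; right; linarith
            linarith
          nlinarith
  have hfinal : G * W = W * z := catalan_tsum_eq t (W*z) htnorm hQfe hQ2 (G*W) hS
  have : G * W = z * W := by rw [hfinal]; ring
  exact mul_right_cancel₀ hW0 this
end
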